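/- arXiv:2012.01100 — 3 statements merged into one kernel-verified Lean document; each statement's English description precedes it below -/
import Mathlib

section
/- Let Q^A(a_1),...,Q^A(a_M) and Q^B(a_1),...,Q^B(a_M) be two collections of integrable random variables such that the collection Q^B is independent of the collection Q^A, and E[Q^A(a_i)] = E[Q^B(a_i)] = μ_i for all i. Let a* be a (measurably chosen) index maximizing Q^A. Then E[Q^B(a*)] ≤ max_i μ_i. -/
open MeasureTheory ProbabilityTheory Finset

/-- The double estimator is negatively biased: if the collection `QB` is
independent of the collection `QA`, both collections are integrable and
unbiased for the values `μ i`, and `a*` is a measurably chosen index maximizing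
`QA` (i.e. a measurable function of the `QA` collection that attains its max),
then `E[QB(a*)] ≤ max_i μ i`. -/
theorem double_estimator_underestimates
    {Ω : Type*} [MeasurableSpace Ω] (P : Measure Ω) [IsProbabilityMeasure P]
    {M : ℕ} [NeZero M] (QA QB : Fin M → Ω → ℝ) (μ : Fin M → ℝ)
    (hintA : ∀ i, Integrable (QA i) P) (hintB : ∀ i, Integrable (QB i) P)
    (hmeanA : ∀ i, ∫ ω, QA i ω ∂P = μ i) (hmeanB : ∀ i, ∫ ω, QB i ω ∂P = μ i)
    (hindep : IndepFun (fun ω i => QA i ω) (fun ω i => QB i ω) P)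
    (g : (Fin M → ℝ) → Fin M) (hg : Measurable g)
    (hargmax : ∀ ω i, QA i ω ≤ QA (g fun j => QA j ω) ω)
    (hintsel : Integrable (fun ω => QB (g fun j => QA j ω) ω) P) :
    ∫ ω, QB (g fun j => QA j ω) ω ∂P ≤ Finset.univ.sup' Finset.univ_nonempty μ := by
  classical
  set f : Ω → (Fin M → ℝ) := fun ω j => QA j ω with hf
  -- f is AEMeasurable
  have hAmeas : ∀ j, AEMeasurable (QA j) P := fun j => (hintA j).aemeasurable
  have hfae : AEMeasurable f P := by
    choose F hFmeas hFeq using fun j => hAmeas j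
    refine ⟨fun ω j => F j ω, measurable_pi_lambda _ fun j => hFmeas j, ?_⟩
    have : ∀ᵐ ω ∂P, ∀ j, QA j ω = F j ω := by
      rw [MeasureTheory.ae_all_iff]; exact hFeq
    filter_upwards [this] with ω hω
    funext j; exact hω j
  -- indicator functions
  set X : Fin M → Ω → ℝ := fun i ω => if g (f ω) = i then (1:ℝ) else 0 with hX
  have hφmeas : ∀ i, Measurable (fun v : Fin M → ℝ => if g v = i then (1:ℝ) else 0) := by
    intro i
    exact Measurable.ite (hg (measurableSet_singleton i)) measurable_const measurable_const
  have hXaesm : ∀ i, AEStronglyMeasurable (X i) P := fun i =>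
    ((hφmeas i).comp_aemeasurable hfae).aestronglyMeasurable
  have hXbd : ∀ i ω, ‖X i ω‖ ≤ 1 := by
    intro i ω; simp only [hX]; split <;> simp
  have hXint : ∀ i, Integrable (X i) P := fun i =>
    (integrable_const (1:ℝ)).mono' (hXaesm i) (Filter.Eventually.of_forall (hXbd i))
  have hXnn : ∀ i ω, 0 ≤ X i ω := by
    intro i ω; simp only [hX]; split <;> norm_num
  -- independence of X i and QB i
  have hind : ∀ i, IndepFun (X i) (QB i) P := by
    intro i
    exact hindep.comp (hφmeas i) (measurable_pi_apply i)
  -- integrability of products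
  have hprodint : ∀ i, Integrable (fun ω => X i ω * QB i ω) P := by
    intro i
    refine (hintB i).abs.mono' ((hXaesm i).mul (hintB i).aestronglyMeasurable) ?_
    refine Filter.Eventually.of_forall fun ω => ?_
    have := hXbd i ω
    rw [Real.norm_eq_abs, abs_mul]
    calc |X i ω| * |QB i ω| ≤ 1 * |QB i ω| := by
          exact mul_le_mul_of_nonneg_right (by simpa using this) (abs_nonneg _)
      _ = |QB i ω| := one_mul _
  -- pointwise decomposition
  have hdecomp : ∀ ω, QB (g (f ω)) ω = ∑ i, X i ω * QB i ω := by
    intro ω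
    simp only [hX, ite_mul, one_mul, zero_mul]
    rw [Finset.sum_ite_eq]
    simp
  -- sum of indicators is 1
  have hsumX : ∀ ω, ∑ i, X i ω = 1 := by
    intro ω
    simp only [hX]
    rw [Finset.sum_ite_eq]
    simp
  have key : ∫ ω, QB (g fun j => QA j ω) ω ∂P = ∑ i, (∫ ω, X i ω ∂P) * μ i := by
    have h1 : ∫ ω, QB (g fun j => QA j ω) ω ∂P = ∑ i, ∫ ω, X i ω * QB i ω ∂P := by
      rw [← integral_finset_sum _ fun i _ => hprodint i]
      exact integral_congr_ae (Filter.Eventually.of_forall fun ω => hdecomp ω)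
    rw [h1]
    refine Finset.sum_congr rfl fun i _ => ?_
    rw [(hind i).integral_fun_mul_eq_mul_integral (hXaesm i) (hintB i).aestronglyMeasurable, hmeanB i]
  rw [key]
  have hsum1 : ∑ i, ∫ ω, X i ω ∂P = 1 := by
    rw [← integral_finset_sum _ fun i _ => hXint i]
    simp [hsumX]
  calc ∑ i, (∫ ω, X i ω ∂P) * μ i
      ≤ ∑ i, (∫ ω, X i ω ∂P) * (Finset.univ.sup' Finset.univ_nonempty μ) := by
        refine Finset.sum_le_sum fun i _ => ?_
        refine mul_le_mul_of_nonneg_left ?_ (integral_nonneg (hXnn i))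
        exact Finset.le_sup' μ (Finset.mem_univ i)
    _ = Finset.univ.sup' Finset.univ_nonempty μ := by
        rw [← Finset.sum_mul, hsum1, one_mul]
end

section
/- Let Q^{B_1}(a_i) and Q^{B_τ}(a_i), i=1,...,M, be two collections of integrable random variables with the collections mutually independent, all unbiased for values μ_i (E[Q^{B_1}(a_i)] = E[Q^{B_τ}(a_i)] = μ_i), and let τ ∈ [0,1). Define Q^{B_0}(a_i) = τ Q^{B_1}(a_i) + (1-τ) Q^{B_τ}(a_i), and let a*_τ be a measurably chosen index maximizing Q^{B_τ}. Then E[Q^{B_1}(a*_τ)] ≤ E[Q^{B_0}(a*_τ)] ≤ E[max_i Q^{B_τ}(a_i)]. -/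
open MeasureTheory ProbabilityTheory Finset

lemma aemeasurable_pi_of_aemeasurable {α : Type*} {ι : Type*} [Countable ι]
    {X : ι → Type*} [∀ i, MeasurableSpace (X i)] [MeasurableSpace α]
    {μ : Measure α} {f : α → ∀ i, X i}
    (h : ∀ i, AEMeasurable (fun a => f a i) μ) : AEMeasurable f μ := by
  refine ⟨fun a i => (h i).mk _ a, measurable_pi_lambda _ fun i => (h i).measurable_mk, ?_⟩
  filter_upwards [MeasureTheory.ae_all_iff.2 fun i => (h i).ae_eq_mk] with a ha
  funext i; exact ha i

/-- Sandwich property of the self-correcting estimator: with `QB1` and `QBτ`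
two mutually independent, integrable, unbiased collections for the values
`μ i`, `τ ∈ [0,1)`, `QB0 i = τ QB1 i + (1-τ) QBτ i` and `a*_τ` a measurably
chosen index maximizing `QBτ`, we have
`E[QB1(a*_τ)] ≤ E[QB0(a*_τ)] ≤ E[max_i QBτ(a_i)]`. -/
theorem self_correcting_estimator_sandwich
    {Ω : Type*} [MeasurableSpace Ω] (P : Measure Ω) [IsProbabilityMeasure P]
    {M : ℕ} [NeZero M] (QB1 QBt : Fin M → Ω → ℝ) (μ : Fin M → ℝ) (τ : ℝ)
    (hτ : τ ∈ Set.Ico (0 : ℝ) 1)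
    (hint1 : ∀ i, Integrable (QB1 i) P) (hintt : ∀ i, Integrable (QBt i) P)
    (hmean1 : ∀ i, ∫ ω, QB1 i ω ∂P = μ i) (hmeant : ∀ i, ∫ ω, QBt i ω ∂P = μ i)
    (hindep : IndepFun (fun ω i => QB1 i ω) (fun ω i => QBt i ω) P)
    (g : (Fin M → ℝ) → Fin M) (hg : Measurable g)
    (hargmax : ∀ ω i, QBt i ω ≤ QBt (g fun j => QBt j ω) ω)
    (hintsel1 : Integrable (fun ω => QB1 (g fun j => QBt j ω) ω) P)
    (hintselt : Integrable (fun ω => QBt (g fun j => QBt j ω) ω) P) :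
    (∫ ω, QB1 (g fun j => QBt j ω) ω ∂P
        ≤ ∫ ω, (τ * QB1 (g fun j => QBt j ω) ω
            + (1 - τ) * QBt (g fun j => QBt j ω) ω) ∂P) ∧
    (∫ ω, (τ * QB1 (g fun j => QBt j ω) ω
        + (1 - τ) * QBt (g fun j => QBt j ω) ω) ∂P
      ≤ ∫ ω, Finset.univ.sup' Finset.univ_nonempty (fun i => QBt i ω) ∂P) := by
  obtain ⟨hτ0, hτ1⟩ := hτ
  -- the indicator of the event that the argmax is `i`
  set A : Fin M → Ω → ℝ := fun i ω => if g (fun j => QBt j ω) = i then (1 : ℝ) else 0 with hA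
  have hAmeas : ∀ i, AEMeasurable (A i) P := by
    intro i
    have hvec : AEMeasurable (fun ω j => QBt j ω) P :=
      aemeasurable_pi_of_aemeasurable fun j => (hintt j).aemeasurable
    have h2 : Measurable fun x : Fin M → ℝ => if g x = i then (1 : ℝ) else 0 := by
      refine Measurable.ite ?_ measurable_const measurable_const
      exact hg (MeasurableSet.singleton i)
    exact h2.comp_aemeasurable hvec
  have hAbound : ∀ i ω, ‖A i ω‖ ≤ 1 := by
    intro i ω; simp only [hA]; split <;> simp
  have hAint : ∀ i, Integrable (A i) P := by
    intro i
    exact (integrable_const (1 : ℝ)).mono' (hAmeas i).aestronglyMeasurable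
      (Filter.Eventually.of_forall (hAbound i))
  have hAindep : ∀ i, IndepFun (QB1 i) (A i) P := by
    intro i
    have hφ : Measurable fun x : Fin M → ℝ => x i := measurable_pi_apply i
    have hψ : Measurable fun x : Fin M → ℝ => if g x = i then (1 : ℝ) else 0 := by
      refine Measurable.ite ?_ measurable_const measurable_const
      exact hg (MeasurableSet.singleton i)
    exact hindep.comp hφ hψ
  have hmul_int : ∀ i, Integrable (fun ω => QB1 i ω * A i ω) P := by
    intro i
    have := Integrable.bdd_mul (c := 1) (hint1 i)
      (hAmeas i).aestronglyMeasurable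
      (Filter.Eventually.of_forall (hAbound i))
    simpa [mul_comm] using this
  set p : Fin M → ℝ := fun i => ∫ ω, A i ω ∂P with hp
  have hpnonneg : ∀ i, 0 ≤ p i := by
    intro i
    refine integral_nonneg fun ω => ?_
    simp only [hA]; split <;> norm_num
  have hpsum : ∑ i, p i = 1 := by
    have h1 : ∀ ω, ∑ i, A i ω = 1 := by
      intro ω
      simp [hA, Finset.sum_ite_eq]
    calc ∑ i, p i = ∫ ω, ∑ i, A i ω ∂P := (integral_finset_sum _ fun i _ => hAint i).symm
      _ = ∫ _, (1 : ℝ) ∂P := by simp only [h1]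
      _ = 1 := by simp
  -- decomposition of the selected QB1
  have hdecomp : ∀ ω, QB1 (g fun j => QBt j ω) ω = ∑ i, QB1 i ω * A i ω := by
    intro ω
    simp [hA, mul_ite, Finset.sum_ite_eq]
  have hE1 : (∫ ω, QB1 (g fun j => QBt j ω) ω ∂P) = ∑ i, μ i * p i := by
    calc (∫ ω, QB1 (g fun j => QBt j ω) ω ∂P)
        = ∫ ω, ∑ i, QB1 i ω * A i ω ∂P := by
          refine integral_congr_ae (Filter.Eventually.of_forall fun ω => ?_)
          exact hdecomp ω
      _ = ∑ i, ∫ ω, QB1 i ω * A i ω ∂P := integral_finset_sum _ fun i _ => hmul_int i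
      _ = ∑ i, μ i * p i := by
          refine Finset.sum_congr rfl fun i _ => ?_
          have := (hAindep i).integral_mul_eq_mul_integral (hint1 i).aestronglyMeasurable (hAint i).aestronglyMeasurable
          simpa [Pi.mul_apply, hmean1 i] using this
  set S : ℝ := ∫ ω, QBt (g fun j => QBt j ω) ω ∂P with hS
  have hμS : ∀ i, μ i ≤ S := by
    intro i
    rw [← hmeant i]
    exact integral_mono (hintt i) hintselt fun ω => hargmax ω i
  have hkey : (∫ ω, QB1 (g fun j => QBt j ω) ω ∂P) ≤ S := by
    rw [hE1]
    calc ∑ i, μ i * p i ≤ ∑ i, S * p i :=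
          Finset.sum_le_sum fun i _ => mul_le_mul_of_nonneg_right (hμS i) (hpnonneg i)
      _ = S := by rw [← Finset.mul_sum, hpsum, mul_one]
  -- the sup' equals the selected QBt pointwise
  have hsup : ∀ ω, Finset.univ.sup' Finset.univ_nonempty (fun i => QBt i ω)
      = QBt (g fun j => QBt j ω) ω := by
    intro ω
    refine le_antisymm (Finset.sup'_le _ _ fun i _ => hargmax ω i) ?_
    exact Finset.le_sup' (fun i => QBt i ω) (Finset.mem_univ _)
  have hsupint : (∫ ω, Finset.univ.sup' Finset.univ_nonempty (fun i => QBt i ω) ∂P) = S := by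
    refine integral_congr_ae (Filter.Eventually.of_forall fun ω => hsup ω)
  set E1 : ℝ := ∫ ω, QB1 (g fun j => QBt j ω) ω ∂P with hE1def
  have hmid : (∫ ω, (τ * QB1 (g fun j => QBt j ω) ω
      + (1 - τ) * QBt (g fun j => QBt j ω) ω) ∂P) = τ * E1 + (1 - τ) * S := by
    rw [integral_add (hintsel1.const_mul τ) (hintselt.const_mul (1 - τ)),
      integral_const_mul, integral_const_mul]
  constructor
  · rw [hmid]
    nlinarith [mul_le_mul_of_nonneg_left hkey (by linarith : (0:ℝ) ≤ 1 - τ)]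
  · rw [hmid, hsupint]
    nlinarith [mul_le_mul_of_nonneg_left hkey hτ0]
end

section
/- Let S, A be finite sets, γ ∈ [0,1), P a transition kernel, R a reward function, Q* the fixed point of the Bellman operator. For functions Q_n, Q_{n-1} : S×A → ℝ and β ≥ 1, set Q_n^β = Q_n − β(Q_n − Q_{n-1}), let â_β(s') maximize Q_n^β(s', ·), and define for each (s,a): E_n(s,a) = Σ_{s'} P(s'|s,a) [R(s,a) + γ Q_n(s', â_β(s')) − Q*(s,a)]. Then max_{s,a} |E_n(s,a)| ≤ γ max_{s',a'} |Q_n^β(s',a') − Q*(s',a')| + γβ max_{s',a'} |Q_n(s',a') − Q_{n-1}(s',a')|. -/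
open Finset

/-- Key bound (Eqn (Fmax)) in the convergence proof of Self-correcting
Q-learning: with `Q* ` the Bellman fixed point, `Q_n^β = Q_n − β(Q_n − Q_{n−1})`,
`â_β(s')` maximizing `Q_n^β(s',·)`, and
`E_n(s,a) = Σ_{s'} P(s'|s,a)(R(s,a) + γ Q_n(s', â_β(s')) − Q*(s,a))`, one has
`max_{s,a}|E_n(s,a)| ≤ γ max|Q_n^β − Q*| + γβ max|Q_n − Q_{n−1}|`. -/
theorem self_correcting_expected_update_bound
    {S A : Type*} [Fintype S] [Nonempty S] [Fintype A] [Nonempty A]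
    (γ : ℝ) (hγ : γ ∈ Set.Ico (0 : ℝ) 1)
    (P : S → A → S → ℝ) (hP0 : ∀ s a s', 0 ≤ P s a s')
    (hP1 : ∀ s a, ∑ s', P s a s' = 1)
    (R : S → A → ℝ)
    (Qstar : S → A → ℝ)
    (hQstar : ∀ s a, Qstar s a
      = R s a + γ * ∑ s', P s a s'
          * (Finset.univ.sup' Finset.univ_nonempty fun a' => Qstar s' a'))
    (Qn Qnm1 : S → A → ℝ) (β : ℝ) (hβ : 1 ≤ β)
    (Qβ : S → A → ℝ)
    (hQβ : ∀ s a, Qβ s a = Qn s a - β * (Qn s a - Qnm1 s a))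
    (ahat : S → A) (hahat : ∀ s' a, Qβ s' a ≤ Qβ s' (ahat s'))
    (En : S → A → ℝ)
    (hEn : ∀ s a, En s a
      = ∑ s', P s a s' * (R s a + γ * Qn s' (ahat s') - Qstar s a)) :
    (Finset.univ.sup' Finset.univ_nonempty fun p : S × A => |En p.1 p.2|)
      ≤ γ * (Finset.univ.sup' Finset.univ_nonempty
              fun p : S × A => |Qβ p.1 p.2 - Qstar p.1 p.2|)
        + γ * β * (Finset.univ.sup' Finset.univ_nonempty
              fun p : S × A => |Qn p.1 p.2 - Qnm1 p.1 p.2|) := by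
  obtain ⟨hγ0, hγ1⟩ := hγ
  set M1 := (Finset.univ.sup' Finset.univ_nonempty
      fun p : S × A => |Qβ p.1 p.2 - Qstar p.1 p.2|) with hM1
  set M2 := (Finset.univ.sup' Finset.univ_nonempty
      fun p : S × A => |Qn p.1 p.2 - Qnm1 p.1 p.2|) with hM2
  have hβ0 : (0:ℝ) ≤ β := le_trans zero_le_one hβ
  have key : ∀ s' : S,
      |Qn s' (ahat s') - Finset.univ.sup' Finset.univ_nonempty (fun a' => Qstar s' a')|
        ≤ M1 + β * M2 := by
    intro s'
    have h1 : Qn s' (ahat s')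
        = Qβ s' (ahat s') + β * (Qn s' (ahat s') - Qnm1 s' (ahat s')) := by
      rw [hQβ]; ring
    have h2 : Qβ s' (ahat s')
        = Finset.univ.sup' Finset.univ_nonempty (fun a' => Qβ s' a') := by
      apply le_antisymm
      · exact Finset.le_sup' _ (Finset.mem_univ _)
      · exact Finset.sup'_le _ _ fun a _ => hahat s' a
    have hQβM : ∀ a : A, |Qβ s' a - Qstar s' a| ≤ M1 := fun a =>
      Finset.le_sup' (f := fun p : S × A => |Qβ p.1 p.2 - Qstar p.1 p.2|)
        (Finset.mem_univ (s', a))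
    have hmax : |Finset.univ.sup' Finset.univ_nonempty (fun a' => Qβ s' a')
        - Finset.univ.sup' Finset.univ_nonempty (fun a' => Qstar s' a')| ≤ M1 := by
      rw [abs_sub_le_iff]
      constructor
      · rw [sub_le_iff_le_add]
        apply Finset.sup'_le; intro a _
        have h3 : Qβ s' a - Qstar s' a ≤ M1 := le_trans (le_abs_self _) (hQβM a)
        have h4 : Qstar s' a ≤ Finset.univ.sup' Finset.univ_nonempty (fun a' => Qstar s' a') :=
          Finset.le_sup' _ (Finset.mem_univ _)
        linarith
      · rw [sub_le_iff_le_add]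
        apply Finset.sup'_le; intro a _
        have h3 : Qstar s' a - Qβ s' a ≤ M1 := by
          have := hQβM a
          rw [abs_sub_comm] at this
          exact le_trans (le_abs_self _) this
        have h4 : Qβ s' a ≤ Finset.univ.sup' Finset.univ_nonempty (fun a' => Qβ s' a') :=
          Finset.le_sup' _ (Finset.mem_univ _)
        linarith
    have hdiff : |Qn s' (ahat s') - Qnm1 s' (ahat s')| ≤ M2 :=
      Finset.le_sup' (f := fun p : S × A => |Qn p.1 p.2 - Qnm1 p.1 p.2|)
        (Finset.mem_univ (s', ahat s'))
    have hc : Qn s' (ahat s') - Finset.univ.sup' Finset.univ_nonempty (fun a' => Qstar s' a')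
        = (Finset.univ.sup' Finset.univ_nonempty (fun a' => Qβ s' a')
            - Finset.univ.sup' Finset.univ_nonempty (fun a' => Qstar s' a'))
            + β * (Qn s' (ahat s') - Qnm1 s' (ahat s')) := by
      rw [← h2]; linarith [h1]
    calc |Qn s' (ahat s') - Finset.univ.sup' Finset.univ_nonempty (fun a' => Qstar s' a')|
        = |(Finset.univ.sup' Finset.univ_nonempty (fun a' => Qβ s' a')
            - Finset.univ.sup' Finset.univ_nonempty (fun a' => Qstar s' a'))
            + β * (Qn s' (ahat s') - Qnm1 s' (ahat s'))| := by rw [hc]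
      _ ≤ |Finset.univ.sup' Finset.univ_nonempty (fun a' => Qβ s' a')
            - Finset.univ.sup' Finset.univ_nonempty (fun a' => Qstar s' a')|
            + |β * (Qn s' (ahat s') - Qnm1 s' (ahat s'))| := abs_add_le _ _
      _ ≤ M1 + β * M2 := by
          rw [abs_mul, abs_of_nonneg hβ0]
          exact add_le_add hmax (mul_le_mul_of_nonneg_left hdiff hβ0)
  apply Finset.sup'_le
  rintro ⟨s, a⟩ -
  have hEn' : En s a = γ * ∑ s', P s a s'
      * (Qn s' (ahat s') - Finset.univ.sup' Finset.univ_nonempty fun a' => Qstar s' a') := by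
    have expand : ∑ s', P s a s' * (R s a + γ * Qn s' (ahat s') - Qstar s a)
        = (R s a - Qstar s a) * (∑ s', P s a s')
          + γ * ∑ s', P s a s' * Qn s' (ahat s') := by
      rw [Finset.mul_sum, Finset.mul_sum, ← Finset.sum_add_distrib]
      exact Finset.sum_congr rfl fun s' _ => by ring
    have split : ∑ s', P s a s'
        * (Qn s' (ahat s') - Finset.univ.sup' Finset.univ_nonempty fun a' => Qstar s' a')
        = (∑ s', P s a s' * Qn s' (ahat s'))
          - ∑ s', P s a s'
            * (Finset.univ.sup' Finset.univ_nonempty fun a' => Qstar s' a') := by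
      rw [← Finset.sum_sub_distrib]
      exact Finset.sum_congr rfl fun s' _ => by ring
    rw [hEn, expand, hP1, split]
    rw [hQstar s a]
    ring
  rw [hEn', abs_mul, abs_of_nonneg hγ0]
  have habs : |∑ s', P s a s'
      * (Qn s' (ahat s') - Finset.univ.sup' Finset.univ_nonempty fun a' => Qstar s' a')|
      ≤ M1 + β * M2 := by
    calc |∑ s', P s a s'
        * (Qn s' (ahat s') - Finset.univ.sup' Finset.univ_nonempty fun a' => Qstar s' a')|
        ≤ ∑ s', |P s a s'
          * (Qn s' (ahat s') - Finset.univ.sup' Finset.univ_nonempty fun a' => Qstar s' a')| :=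
          Finset.abs_sum_le_sum_abs _ _
      _ ≤ ∑ s', P s a s' * (M1 + β * M2) := by
          apply Finset.sum_le_sum
          intro s' _
          rw [abs_mul, abs_of_nonneg (hP0 s a s')]
          exact mul_le_mul_of_nonneg_left (key s') (hP0 s a s')
      _ = M1 + β * M2 := by rw [← Finset.sum_mul, hP1, one_mul]
  calc γ * |∑ s', P s a s'
      * (Qn s' (ahat s') - Finset.univ.sup' Finset.univ_nonempty fun a' => Qstar s' a')|
      ≤ γ * (M1 + β * M2) := mul_le_mul_of_nonneg_left habs hγ0
    _ = γ * M1 + γ * β * M2 := by ring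
end
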